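/- Let b ∈ L^∞(ℝ) and λ ∈ ℝ, and let e_λ(x) := e^{2πiλx}. Then, in the operator norm on L^2(ℝ), ‖W^0(b) ∘ M_{e_λ} − M_{e_λ} ∘ W^0(b)‖ = ‖b − b(· − λ)‖_{L^∞(ℝ)}, i.e. the norm of the commutator of the Fourier convolution operator W^0(b) with the modulation operator M_{e_λ} equals the essential supremum of |b(x) − b(x − λ)| over x ∈ ℝ. -/

import Mathlib

open MeasureTheory Filter Topology
open scoped ENNReal

noncomputable section

/-- The space `L^2(ℝ)` of complex-valued square-integrable functions on `ℝ`. -/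
abbrev L2Sp := Lp ℂ 2 (volume : Measure ℝ)

/-- Bounded operators on `L^2(ℝ)`. -/
abbrev OpSp := L2Sp →L[ℂ] L2Sp

/-- `M` is the operator of multiplication by the function `a` on `L^2(ℝ)`. -/
def IsMulOp (a : ℝ → ℂ) (M : OpSp) : Prop :=
  ∀ u : L2Sp, (M u : ℝ → ℂ) =ᵐ[volume] fun x => a x * (u : ℝ → ℂ) x

/-- `F` is the Fourier–Plancherel transform on `L^2(ℝ)`: the unitary extending
`u ↦ (ξ ↦ ∫ u(x) e^{-2πixξ} dx)` from integrable functions. -/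
def IsFourierPlancherel (F : L2Sp ≃ₗᵢ[ℂ] L2Sp) : Prop :=
  ∀ u : L2Sp, Integrable (u : ℝ → ℂ) volume →
    (F u : ℝ → ℂ) =ᵐ[volume]
      fun ξ => ∫ x : ℝ, Complex.exp (-(2 * (Real.pi : ℂ) * Complex.I * (x : ℂ) * (ξ : ℂ))) *
        (u : ℝ → ℂ) x

namespace Stmt11Aux

/-- The translation operator `u ↦ u (· - lam)` on `L²(ℝ)`. -/
def T (lam : ℝ) : OpSp :=
  (Lp.compMeasurePreservingₗᵢ (E := ℂ) (p := 2) ℂ (fun x : ℝ => x - lam)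
    (measurePreserving_sub_right volume lam)).toContinuousLinearMap

lemma T_coeFn (lam : ℝ) (u : L2Sp) :
    (T lam u : ℝ → ℂ) =ᵐ[volume] ((u : ℝ → ℂ) ∘ fun x => x - lam) :=
  Lp.coeFn_compMeasurePreserving u (measurePreserving_sub_right volume lam)

lemma norm_T (lam : ℝ) (u : L2Sp) : ‖T lam u‖ = ‖u‖ :=
  (Lp.compMeasurePreservingₗᵢ (E := ℂ) (p := 2) ℂ (fun x : ℝ => x - lam)
    (measurePreserving_sub_right volume lam)).norm_map u

/-- Integrable functions are dense in `L²(ℝ)`. -/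
lemma dense_integrable :
    Dense {u : L2Sp | Integrable (u : ℝ → ℂ) volume} := by
  rw [Metric.dense_iff]
  intro u r hr
  obtain ⟨g, gsupp, hg, gcont, gmem⟩ :=
    (Lp.memLp u).exists_hasCompactSupport_eLpNorm_sub_le (μ := volume) (p := 2)
      (by norm_num) (ε := ENNReal.ofReal (r / 2))
      (ne_of_gt (ENNReal.ofReal_pos.mpr (by linarith)))
  refine ⟨gmem.toLp g, ?_, ?_⟩
  · have hcoe : ((gmem.toLp g : L2Sp) : ℝ → ℂ) =ᵐ[volume] g := gmem.coeFn_toLp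
    have hsub : ((gmem.toLp g - u : L2Sp) : ℝ → ℂ) =ᵐ[volume]
        (fun x => g x - (u : ℝ → ℂ) x) := by
      filter_upwards [Lp.coeFn_sub (gmem.toLp g) u, hcoe] with x h1 h2
      rw [h1, Pi.sub_apply, h2]
    have : ‖gmem.toLp g - u‖ ≤ r / 2 := by
      rw [Lp.norm_def, eLpNorm_congr_ae hsub]
      have hneg : eLpNorm (fun x => g x - (u : ℝ → ℂ) x) 2 volume
          = eLpNorm ((u : ℝ → ℂ) - g) 2 volume := by
        rw [← eLpNorm_neg]
        congr 1
        ext x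
        simp
      rw [hneg]
      exact ENNReal.toReal_le_of_le_ofReal (by linarith) hg
    rw [Metric.mem_ball, dist_eq_norm]
    calc ‖gmem.toLp g - u‖ ≤ r / 2 := this
      _ < r := by linarith
  · exact (gcont.integrable_of_hasCompactSupport gsupp).congr gmem.coeFn_toLp.symm

lemma modulation_fourier (F : L2Sp ≃ₗᵢ[ℂ] L2Sp) (hF : IsFourierPlancherel F) (lam : ℝ)
    (E : OpSp)
    (hE : IsMulOp (fun x => Complex.exp (2 * (Real.pi : ℂ) * Complex.I * (lam : ℂ) * (x : ℂ))) E)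
    (u : L2Sp) : F (E u) = T lam (F u) := by
  set e : ℝ → ℂ := fun x => Complex.exp (2 * (Real.pi : ℂ) * Complex.I * (lam : ℂ) * (x : ℂ))
    with he
  have henorm : ∀ x : ℝ, ‖e x‖ = 1 := by
    intro x
    have harg : 2 * (Real.pi : ℂ) * Complex.I * (lam : ℂ) * (x : ℂ)
        = ((2 * Real.pi * lam * x : ℝ) : ℂ) * Complex.I := by push_cast; ring
    rw [he]
    simp only []
    rw [harg]
    exact Complex.norm_exp_ofReal_mul_I _
  have hcont_e : Continuous e := by
    apply Complex.continuous_exp.comp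
    continuity
  have hfun : (fun u : L2Sp => F (E u)) = fun u : L2Sp => T lam (F u) := by
    refine Continuous.ext_on dense_integrable
      (F.continuous.comp E.continuous) ((T lam).continuous.comp F.continuous) ?_
    intro u hu
    simp only [Set.mem_setOf_eq] at hu
    have hEu : ((E u : L2Sp) : ℝ → ℂ) =ᵐ[volume] fun x => e x * (u : ℝ → ℂ) x := hE u
    have hEu_int : Integrable ((E u : L2Sp) : ℝ → ℂ) volume :=
      (hu.bdd_mul hcont_e.aestronglyMeasurable (Eventually.of_forall fun x => (henorm x).le)).congr hEu.symm
    have h1 := hF (E u) hEu_int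
    set g : ℝ → ℂ := fun ξ => ∫ x : ℝ,
      Complex.exp (-(2 * (Real.pi : ℂ) * Complex.I * (x : ℂ) * (ξ : ℂ))) * (u : ℝ → ℂ) x with hgdef
    have h2 : (fun ξ : ℝ => ∫ x : ℝ,
        Complex.exp (-(2 * (Real.pi : ℂ) * Complex.I * (x : ℂ) * (ξ : ℂ))) *
          ((E u : L2Sp) : ℝ → ℂ) x) = fun ξ : ℝ => g (ξ - lam) := by
      funext ξ
      rw [hgdef]
      refine integral_congr_ae ?_
      filter_upwards [hEu] with x hx
      rw [hx, ← mul_assoc, ← Complex.exp_add]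
      congr 2
      push_cast
      ring
    have h3 := hF u hu
    have h4 := T_coeFn lam (F u)
    have h5 : ((F u : L2Sp) : ℝ → ℂ) ∘ (fun x => x - lam) =ᵐ[volume]
        g ∘ (fun x => x - lam) :=
      (measurePreserving_sub_right volume lam).quasiMeasurePreserving.ae_eq h3
    apply Lp.ext
    calc ((F (E u) : L2Sp) : ℝ → ℂ)
        =ᵐ[volume] fun ξ => g (ξ - lam) := by rw [← h2]; exact h1
      _ =ᵐ[volume] ((T lam (F u) : L2Sp) : ℝ → ℂ) := (h4.trans h5).symm
  exact congrFun hfun u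

end Stmt11Aux

open Stmt11Aux in
/-- for `b ∈ L^∞(ℝ)` and `λ ∈ ℝ`, the norm of the commutator of the convolution
operator `W⁰(b) = 𝓕⁻¹ M_b 𝓕` with the modulation `M_{e_λ}`, `e_λ(x) = e^{2πiλx}`, equals
`‖b - b(· - λ)‖_{L^∞(ℝ)}`. -/
theorem stmt_11 (b : ℝ → ℂ) (hbm : Measurable b) (C : ℝ) (hbd : ∀ x : ℝ, ‖b x‖ ≤ C)
    (F : L2Sp ≃ₗᵢ[ℂ] L2Sp) (hF : IsFourierPlancherel F)
    (Mb : OpSp) (hMb : IsMulOp b Mb)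
    (lam : ℝ) (E : OpSp)
    (hE : IsMulOp (fun x => Complex.exp (2 * (Real.pi : ℂ) * Complex.I * (lam : ℂ) * (x : ℂ))) E)
    (Wb : OpSp) (hWb : ∀ u : L2Sp, Wb u = F.symm (Mb (F u))) :
    ‖Wb * E - E * Wb‖ = (eLpNorm (fun x => b x - b (x - lam)) ⊤ volume).toReal := by
  set c : ℝ → ℂ := fun x => b x - b (x - lam) with hc
  have hcm : Measurable c := hbm.sub (hbm.comp (measurable_id.sub_const lam))
  set SE : ℝ≥0∞ := eLpNorm c ⊤ volume with hSE
  have hSEtop : SE ≠ ∞ := by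
    rw [hSE, eLpNorm_exponent_top]
    refine (eLpNormEssSup_le_of_ae_bound (C := C + C) ?_).trans_lt ENNReal.ofReal_lt_top |>.ne
    filter_upwards with x
    calc ‖c x‖ ≤ ‖b x‖ + ‖b (x - lam)‖ := norm_sub_le _ _
      _ ≤ C + C := add_le_add (hbd x) (hbd _)
  have hkey : ∀ u : L2Sp, F (E u) = T lam (F u) := modulation_fourier F hF lam E hE
  have hkey' : ∀ v : L2Sp, E (F.symm v) = F.symm (T lam v) := by
    intro v
    have h := hkey (F.symm v)
    rw [F.apply_symm_apply] at h
    calc E (F.symm v) = F.symm (F (E (F.symm v))) := (F.symm_apply_apply _).symm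
      _ = F.symm (T lam v) := by rw [h]
  set G : OpSp := Mb.comp (T lam) - (T lam).comp Mb with hG
  have hKG : ∀ u : L2Sp, (Wb * E - E * Wb) u = F.symm (G (F u)) := by
    intro u
    simp only [ContinuousLinearMap.sub_apply, ContinuousLinearMap.mul_apply, hG,
      ContinuousLinearMap.coe_sub', Pi.sub_apply, ContinuousLinearMap.coe_comp',
      Function.comp_apply, map_sub]
    rw [hWb, hWb, hkey u, hkey' (Mb (F u))]
  have hnormKG : ‖Wb * E - E * Wb‖ = ‖G‖ := by
    apply le_antisymm
    · refine ContinuousLinearMap.opNorm_le_bound _ (norm_nonneg G) fun u => ?_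
      rw [hKG u, F.symm.norm_map]
      calc ‖G (F u)‖ ≤ ‖G‖ * ‖F u‖ := G.le_opNorm _
        _ = ‖G‖ * ‖u‖ := by rw [F.norm_map]
    · refine ContinuousLinearMap.opNorm_le_bound _ (norm_nonneg _) fun w => ?_
      have hGw : ‖G w‖ = ‖(Wb * E - E * Wb) (F.symm w)‖ := by
        rw [hKG, F.apply_symm_apply, F.symm.norm_map]
      rw [hGw]
      calc ‖(Wb * E - E * Wb) (F.symm w)‖ ≤ ‖Wb * E - E * Wb‖ * ‖F.symm w‖ :=
            (Wb * E - E * Wb).le_opNorm _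
        _ = ‖Wb * E - E * Wb‖ * ‖w‖ := by rw [F.symm.norm_map]
  rw [hnormKG]
  -- ae description of `G w`
  have hGae : ∀ w : L2Sp, ((G w : L2Sp) : ℝ → ℂ) =ᵐ[volume]
      fun ξ => c ξ * ((T lam w : L2Sp) : ℝ → ℂ) ξ := by
    intro w
    have h0 : ((G w : L2Sp) : ℝ → ℂ) =ᵐ[volume]
        ((Mb (T lam w) : L2Sp) : ℝ → ℂ) - ((T lam (Mb w) : L2Sp) : ℝ → ℂ) := by
      have : G w = Mb (T lam w) - T lam (Mb w) := by
        simp [hG, ContinuousLinearMap.sub_apply]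
      rw [this]
      exact Lp.coeFn_sub _ _
    have h1 := hMb (T lam w)
    have h2 := T_coeFn lam (Mb w)
    have h3 : ((Mb w : L2Sp) : ℝ → ℂ) ∘ (fun x => x - lam) =ᵐ[volume]
        (fun x => b x * (w : ℝ → ℂ) x) ∘ (fun x => x - lam) :=
      (measurePreserving_sub_right volume lam).quasiMeasurePreserving.ae_eq (hMb w)
    have h4 := T_coeFn lam w
    filter_upwards [h0, h1, h2.trans h3, h4] with ξ e0 e1 e2 e4
    rw [e0, Pi.sub_apply, e1, e2, Function.comp_apply, e4, Function.comp_apply, hc]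
    ring
  -- upper bound
  have hupper : ∀ w : L2Sp, ‖G w‖ ≤ SE.toReal * ‖w‖ := by
    intro w
    rw [Lp.norm_def, eLpNorm_congr_ae (hGae w)]
    have hb : eLpNorm (fun ξ => c ξ * ((T lam w : L2Sp) : ℝ → ℂ) ξ) 2 volume
        ≤ eLpNorm c ∞ volume * eLpNorm ((T lam w : L2Sp) : ℝ → ℂ) 2 volume :=
      eLpNorm_smul_le_eLpNorm_top_mul_eLpNorm 2 (Lp.aestronglyMeasurable _) c
    have hfin : eLpNorm c ∞ volume * eLpNorm ((T lam w : L2Sp) : ℝ → ℂ) 2 volume ≠ ∞ :=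
      ENNReal.mul_ne_top hSEtop (Lp.eLpNorm_ne_top _)
    calc (eLpNorm (fun ξ => c ξ * ((T lam w : L2Sp) : ℝ → ℂ) ξ) 2 volume).toReal
        ≤ (eLpNorm c ∞ volume * eLpNorm ((T lam w : L2Sp) : ℝ → ℂ) 2 volume).toReal :=
          ENNReal.toReal_mono hfin hb
      _ = SE.toReal * ‖T lam w‖ := by
          rw [ENNReal.toReal_mul, ← Lp.norm_def]
      _ = SE.toReal * ‖w‖ := by rw [norm_T]
  -- lower bound
  have hlower : SE.toReal ≤ ‖G‖ := by
    by_contra hcon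
    push_neg at hcon
    set r : ℝ := (‖G‖ + SE.toReal) / 2 with hrdef
    have hr0 : 0 ≤ r := by
      have := norm_nonneg G
      have := ENNReal.toReal_nonneg (a := SE)
      rw [hrdef]; linarith
    have hrS : r < SE.toReal := by rw [hrdef]; linarith
    have hGr : ‖G‖ < r := by rw [hrdef]; linarith
    have ht : ENNReal.ofReal r < SE := (ENNReal.ofReal_lt_iff_lt_toReal hr0 hSEtop).mpr hrS
    set A : Set ℝ := {x | ENNReal.ofReal r < (‖c x‖₊ : ℝ≥0∞)} with hA
    have hAm : MeasurableSet A := measurableSet_lt measurable_const hcm.nnnorm.coe_nnreal_ennreal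
    have hApos : 0 < volume A := by
      rcases eq_zero_or_pos (volume A) with h0 | h
      · exfalso
        have hae : ∀ᵐ x ∂(volume : Measure ℝ), ‖c x‖ ≤ r := by
          have : ∀ᵐ x ∂(volume : Measure ℝ), x ∉ A := by
            rw [ae_iff]
            simpa using h0
          filter_upwards [this] with x hx
          rw [hA, Set.mem_setOf_eq, not_lt, ← enorm_eq_nnnorm, ← ofReal_norm] at hx
          exact (ENNReal.ofReal_le_ofReal_iff hr0).mp hx
        have : SE ≤ ENNReal.ofReal r := by
          rw [hSE, eLpNorm_exponent_top]
          exact eLpNormEssSup_le_of_ae_bound hae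
        exact absurd this (not_le.mpr ht)
      · exact h
    obtain ⟨A', hA'm, hA'sub, hA'pos, hA'top⟩ :=
      MeasureTheory.Measure.exists_subset_measure_lt_top hAm hApos
    set B : Set ℝ := (fun y => y + lam) ⁻¹' A' with hB
    have hBm : MeasurableSet B := hA'm.preimage (measurable_add_const lam)
    have hBvol : volume B = volume A' :=
      (measurePreserving_add_right volume lam).measure_preimage hA'm.nullMeasurableSet
    have hBtop : volume B ≠ ∞ := by rw [hBvol]; exact hA'top.ne
    set w : L2Sp := indicatorConstLp 2 hBm hBtop (1 : ℂ) with hw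
    have hTw : ((T lam w : L2Sp) : ℝ → ℂ) =ᵐ[volume]
        A'.indicator (fun _ => (1 : ℂ)) := by
      have h1 := T_coeFn lam w
      have h2 : ((w : L2Sp) : ℝ → ℂ) ∘ (fun x => x - lam) =ᵐ[volume]
          (B.indicator (fun _ => (1 : ℂ))) ∘ (fun x => x - lam) :=
        (measurePreserving_sub_right volume lam).quasiMeasurePreserving.ae_eq
          indicatorConstLp_coeFn
      refine h1.trans (h2.trans (Eventually.of_forall fun x => ?_))
      have hxmem : x - lam ∈ B ↔ x ∈ A' := by
        rw [hB, Set.mem_preimage, sub_add_cancel]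
      simp only [Function.comp_apply]
      by_cases hx : x ∈ A'
      · rw [Set.indicator_of_mem (hxmem.mpr hx), Set.indicator_of_mem hx]
      · rw [Set.indicator_of_notMem (fun hmem => hx (hxmem.mp hmem)),
          Set.indicator_of_notMem hx]
    have hGwA : ((G w : L2Sp) : ℝ → ℂ) =ᵐ[volume] A'.indicator c := by
      refine (hGae w).trans ?_
      filter_upwards [hTw] with ξ hξ
      rw [hξ]
      by_cases hmem : ξ ∈ A'
      · rw [Set.indicator_of_mem hmem, Set.indicator_of_mem hmem, mul_one]
      · rw [Set.indicator_of_notMem hmem, Set.indicator_of_notMem hmem, mul_zero]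
    have hrc : ∀ x ∈ A', r ≤ ‖c x‖ := by
      intro x hx
      have hxA : x ∈ A := hA'sub hx
      rw [hA, Set.mem_setOf_eq, ← enorm_eq_nnnorm, ← ofReal_norm] at hxA
      exact ((ENNReal.ofReal_lt_ofReal_iff_of_nonneg hr0).mp hxA).le
    have hmono : eLpNorm (A'.indicator fun _ => (r : ℂ)) 2 volume
        ≤ eLpNorm (A'.indicator c) 2 volume := by
      apply eLpNorm_mono
      intro x
      by_cases hx : x ∈ A'
      · rw [Set.indicator_of_mem hx, Set.indicator_of_mem hx, Complex.norm_real,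
          Real.norm_of_nonneg hr0]
        exact hrc x hx
      · rw [Set.indicator_of_notMem hx, Set.indicator_of_notMem hx]
    have hval : eLpNorm (A'.indicator fun _ => (r : ℂ)) 2 volume
        = ‖(r : ℂ)‖₊ * volume A' ^ (1 / (2 : ℝ≥0∞).toReal) :=
      eLpNorm_indicator_const hA'm (by norm_num) (by norm_num)
    have hnormw : ‖w‖ = (volume A').toReal ^ (1 / (2 : ℝ≥0∞).toReal) := by
      rw [hw, norm_indicatorConstLp (by norm_num) (by norm_num), measureReal_def, hBvol, norm_one, one_mul]
    have hfinA : eLpNorm (A'.indicator c) 2 volume ≠ ∞ := by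
      rw [← eLpNorm_congr_ae hGwA]
      exact Lp.eLpNorm_ne_top _
    have hGw_lb : r * ‖w‖ ≤ ‖G w‖ := by
      have hGnorm : ‖G w‖ = (eLpNorm (A'.indicator c) 2 volume).toReal := by
        rw [Lp.norm_def, eLpNorm_congr_ae hGwA]
      rw [hGnorm]
      have h1 : (eLpNorm (A'.indicator fun _ => (r : ℂ)) 2 volume).toReal
          ≤ (eLpNorm (A'.indicator c) 2 volume).toReal :=
        ENNReal.toReal_mono hfinA hmono
      refine le_trans (le_of_eq ?_) h1
      rw [hval, ENNReal.toReal_mul, ← ENNReal.toReal_rpow, hnormw]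
      congr 1
      rw [ENNReal.coe_toReal, coe_nnnorm, Complex.norm_real, Real.norm_of_nonneg hr0]
    have hwpos : 0 < ‖w‖ := by
      rw [hnormw]
      apply Real.rpow_pos_of_pos
      exact ENNReal.toReal_pos hA'pos.ne' hA'top.ne
    have : r ≤ ‖G‖ := by
      have hratio : r ≤ ‖G w‖ / ‖w‖ := (le_div_iff₀ hwpos).mpr hGw_lb
      exact hratio.trans (G.ratio_le_opNorm w)
    linarith
  have : ‖G‖ = SE.toReal := by
    apply le_antisymm
    · exact ContinuousLinearMap.opNorm_le_bound _ ENNReal.toReal_nonneg hupper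
    · exact hlower
  rw [this, hSE]
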